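/- Let a, b, c, d be real numbers with ac ≠ 0, x_A = −b/a, x_B = −d/c, and suppose Δ_Δ := c² − a²(cx_A + d) > 0 and c(x_A − x_B) ≤ 0 (i.e., B(x_A) ≤ 0). Then the intersection of the circle C₀ = {z ∈ ℂ : |z − x_B| = |x_A − x_B|} with the strip S₀ = {z : |Re z − x_A| ≤ |2c/a²| and c·(Re z − x_A) ≤ 0} is exactly the singleton {x_A}. -/

import Mathlib

theorem stmt_8 (a b c d : ℝ) (h : a * c ≠ 0)
    (hΔΔ : 0 < c ^ 2 - a ^ 2 * (c * (-b / a) + d))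
    (hB : c * ((-b / a) - (-d / c)) ≤ 0) :
    {z : ℂ | ‖z - ((-d / c : ℝ) : ℂ)‖ = |(-b / a) - (-d / c)|} ∩
      {z : ℂ | |z.re - (-b / a)| ≤ |2 * c / a ^ 2| ∧ c * (z.re - (-b / a)) ≤ 0}
    = {((-b / a : ℝ) : ℂ)} := by
  have hc : c ≠ 0 := fun hc => h (by rw [hc, mul_zero])
  have ha : a ≠ 0 := fun ha => h (by rw [ha, zero_mul])
  ext z
  simp only [Set.mem_inter_iff, Set.mem_setOf_eq, Set.mem_singleton_iff]
  constructor
  · rintro ⟨h1, h2, h3⟩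
    have key : (‖z - ((-d / c : ℝ) : ℂ)‖)^2 = (|(-b / a) - (-d / c)|)^2 := by
      rw [h1]
    rw [Complex.sq_norm, Complex.normSq_apply, sq_abs] at key
    simp only [Complex.sub_re, Complex.ofReal_re, Complex.sub_im, Complex.ofReal_im,
      sub_zero] at key
    set u := z.re - (-b / a) with hu
    set v := (-b / a : ℝ) - (-d / c) with hv
    have hz : z.re - -d / c = u + v := by rw [hu, hv]; ring
    rw [hz] at key
    have hcu : (c * u) ^ 2 ≤ 0 := by
      nlinarith [mul_nonneg (neg_nonneg.2 h3) (neg_nonneg.2 hB), sq_nonneg (c * z.im),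
        sq_nonneg c]
    have hu0 : u = 0 := by
      have h0 : c * u = 0 := by
        have := sq_nonneg (c * u)
        have : (c * u) ^ 2 = 0 := le_antisymm hcu this
        exact pow_eq_zero_iff (by norm_num) |>.mp this
      exact (mul_eq_zero.mp h0).resolve_left hc
    have hre : z.re = -b / a := by have := hu0; rw [hu] at this; linarith
    rw [hu0] at key
    have him : z.im = 0 := by
      have : z.im * z.im = 0 := by nlinarith
      exact mul_self_eq_zero.mp this
    apply Complex.ext <;> simp [hre, him]
  · rintro rfl
    refine ⟨?_, by simp, by simp⟩
    rw [show ((-b / a : ℝ) : ℂ) - ((-d / c : ℝ) : ℂ) = ((-b/a - -d/c : ℝ) : ℂ) by push_cast; ring, Complex.norm_real, Real.norm_eq_abs]
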